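/- Let A, B : V → V be linear operators on a finite-dimensional space V, with A diagonalizable with non-degenerate spectrum, eigenvectors |φ_i⟩ and dual functionals ⟨ψ_i| satisfying ⟨ψ_i|φ_j⟩ = δ_ij. Define B_{ji} = ⟨ψ_i|B|φ_j⟩. If W is a subspace invariant under both A and B containing |φ_j⟩, and B_{ji} ≠ 0, then |φ_i⟩ ∈ W. -/

import Mathlib

open Polynomial

lemma prod_apply_eig {V : Type*} [AddCommGroup V] [Module ℂ V]
    {M : ℕ} (A : Module.End ℂ V) (φ : Fin M → V) (lam : Fin M → ℂ)
    (heig : ∀ i, A (φ i) = lam i • φ i) (S : Finset (Fin M)) (k : Fin M) :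
    (Polynomial.aeval A (∏ s ∈ S, (X - C (lam s)))) (φ k)
      = (∏ s ∈ S, (lam k - lam s)) • φ k := by
  induction S using Finset.induction_on with
  | empty => simp
  | insert _ _ hnotmem ih =>
    rw [Finset.prod_insert hnotmem, Finset.prod_insert hnotmem, map_mul,
      Module.End.mul_apply, ih, map_sub, aeval_X, aeval_C]
    simp only [LinearMap.map_smul, LinearMap.sub_apply, Module.algebraMap_end_apply,
      heig, mul_smul]
    rw [← smul_sub, ← sub_smul, smul_comm]

lemma prod_mem_inv {V : Type*} [AddCommGroup V] [Module ℂ V]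
    {M : ℕ} (A : Module.End ℂ V) (lam : Fin M → ℂ)
    (W : Submodule ℂ V) (hWA : ∀ w ∈ W, A w ∈ W) (S : Finset (Fin M))
    {w : V} (hw : w ∈ W) :
    (Polynomial.aeval A (∏ s ∈ S, (X - C (lam s)))) w ∈ W := by
  induction S using Finset.induction_on with
  | empty => simpa
  | insert _ _ hnotmem ih =>
    rw [Finset.prod_insert hnotmem, map_mul, Module.End.mul_apply, map_sub, aeval_X, aeval_C]
    simp only [LinearMap.sub_apply, Module.algebraMap_end_apply]
    exact W.sub_mem (hWA _ ih) (W.smul_mem _ ih)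

/-- If W is invariant under both A (diagonalizable, non-degenerate spectrum, eigenvectors φ,
dual functionals ψd) and B, contains φ j, and B_{ji} = ψd i (B (φ j)) ≠ 0, then φ i ∈ W. -/
theorem stmt1 {V : Type*} [AddCommGroup V] [Module ℂ V] [FiniteDimensional ℂ V]
    {M : ℕ} (A B : V →ₗ[ℂ] V) (φ : Fin M → V) (lam : Fin M → ℂ)
    (ψd : Fin M → (V →ₗ[ℂ] ℂ))
    (hspan : ∀ v : V, ∃ c : Fin M → ℂ, v = ∑ k, c k • φ k)
    (hindep : LinearIndependent ℂ φ)
    (heig : ∀ i, A (φ i) = lam i • φ i)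
    (hdistinct : Function.Injective lam)
    (hdual : ∀ i j, ψd i (φ j) = if i = j then 1 else 0)
    (W : Submodule ℂ V) (hWA : ∀ w ∈ W, A w ∈ W) (hWB : ∀ w ∈ W, B w ∈ W)
    (i j : Fin M) (hj : φ j ∈ W) (hBji : ψd i (B (φ j)) ≠ 0) :
    φ i ∈ W := by
  set v := B (φ j) with hv
  have hvW : v ∈ W := hWB _ hj
  obtain ⟨c, hc⟩ := hspan v
  have hci : c i = ψd i v := by
    rw [hc, map_sum]
    simp only [LinearMap.map_smul, hdual, smul_eq_mul]
    simp
  set S := Finset.univ.erase i with hS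
  set P := Polynomial.aeval (A : Module.End ℂ V) (∏ s ∈ S, (X - C (lam s))) with hP
  have hPv : P v ∈ W := prod_mem_inv A lam W hWA S hvW
  set d := ∏ s ∈ S, (lam i - lam s) with hd
  have hdne : d ≠ 0 := by
    rw [hd]
    apply Finset.prod_ne_zero_iff.mpr
    intro s hs
    have hne : s ≠ i := Finset.ne_of_mem_erase hs
    intro h
    exact hne (hdistinct (sub_eq_zero.mp h)).symm
  have hPveq : P v = (c i * d) • φ i := by
    rw [hc, map_sum]
    simp only [LinearMap.map_smul, hP]
    rw [Finset.sum_eq_single i]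
    · rw [prod_apply_eig A φ lam heig, ← hd, smul_smul]
    · intro k _ hk
      rw [prod_apply_eig A φ lam heig]
      have hz : ∏ s ∈ S, (lam k - lam s) = 0 :=
        Finset.prod_eq_zero (Finset.mem_erase.mpr ⟨hk, Finset.mem_univ k⟩) (by ring)
      rw [hz, zero_smul, smul_zero]
    · simp
  have hcine : c i ≠ 0 := by rw [hci]; exact hBji
  have hfin : φ i = (c i * d)⁻¹ • (P v) := by
    rw [hPveq, smul_smul, inv_mul_cancel₀ (mul_ne_zero hcine hdne), one_smul]
  rw [hfin]
  exact W.smul_mem _ hPv
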